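/- arXiv:1805.00440 — 3 statements merged into one kernel-verified Lean document; each statement's English description precedes it below -/
import Mathlib

section
/- Let F be a totally real number field of degree d over ℚ, with real embeddings σ_1, …, σ_d : F → ℝ, and let 𝓞_F be its ring of integers. Let Γ be a subgroup of finite index of the unit group 𝓞_F^×, and fix a d-tuple of integers (n_1, …, n_d) ≠ (0, …, 0). Then ∏_{i=1}^d |σ_i(t)|^{n_i} = 1 for every t ∈ Γ if and only if all the n_i are equal to a common integer. -/
open scoped NumberField

open NumberField NumberField.InfinitePlace NumberField.Units NumberField.Units.dirichletUnitTheorem Finset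

/-- Let `F` be a totally real number field of degree `d` over `ℚ`, with
(pairwise distinct) real embeddings `σ 0, …, σ (d-1) : F → ℝ`, and let `Γ` be a finite
index subgroup of the unit group `(𝓞 F)ˣ`.  Fix a `d`-tuple of integers `n ≠ 0`.  Then
`∏ i, |σ i t| ^ (n i) = 1` for every `t ∈ Γ` if and only if all the `n i` are equal to a
common integer. -/
theorem prod_abs_embedding_zpow_eq_one_iff_parallel_of_finiteIndex
    {F : Type} [Field F] [NumberField F] {d : ℕ}
    (σ : Fin d → (F →+* ℝ)) (hσ : Function.Injective σ)
    (hd : d = Module.finrank ℚ F)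
    (Γ : Subgroup (𝓞 F)ˣ) (hΓ : Γ.FiniteIndex)
    (n : Fin d → ℤ) (hn : n ≠ 0) :
    (∀ t ∈ Γ, ∏ i, |σ i (algebraMap (𝓞 F) F (t : 𝓞 F))| ^ n i = 1) ↔
      ∃ m : ℤ, ∀ i, n i = m := by
  classical
  -- the complex embeddings attached to σ
  set φ : Fin d → (F →+* ℂ) := fun i => Complex.ofRealHom.comp (σ i) with hφdef
  have hreal : ∀ i, ComplexEmbedding.IsReal (φ i) := by
    intro i
    rw [ComplexEmbedding.isReal_iff]
    ext x
    simp [ComplexEmbedding.conjugate, φ, Complex.conj_ofReal]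
  have hφinj : Function.Injective φ := by
    intro i j h
    apply hσ
    ext x
    have := RingHom.congr_fun h x
    simpa [φ, Complex.ofReal_inj] using this
  have hmkinj : Function.Injective fun i => InfinitePlace.mk (φ i) := by
    intro i j h
    rcases mk_eq_iff.mp h with h' | h'
    · exact hφinj h'
    · rw [ComplexEmbedding.isReal_iff.mp (hreal i)] at h'
      exact hφinj h'
  have hcard : Fintype.card (InfinitePlace F) = d := by
    have h1 : d ≤ Fintype.card (InfinitePlace F) := by
      simpa using Fintype.card_le_of_injective _ hmkinj
    have h2 : Fintype.card (InfinitePlace F) ≤ d := by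
      have := sum_mult_eq (K := F)
      calc Fintype.card (InfinitePlace F) = ∑ w : InfinitePlace F, 1 := by simp
        _ ≤ ∑ w : InfinitePlace F, mult w := Finset.sum_le_sum fun w _ => mult_pos
        _ = d := by rw [this, hd]
    omega
  have hbij : Function.Bijective fun i => InfinitePlace.mk (φ i) :=
    (Fintype.bijective_iff_injective_and_card _).2 ⟨hmkinj, by simp [hcard]⟩
  set e : Fin d ≃ InfinitePlace F := Equiv.ofBijective _ hbij with hedef
  have happly : ∀ (i : Fin d) (x : F), e i x = |σ i x| := by
    intro i x
    show InfinitePlace.mk (φ i) x = _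
    rw [InfinitePlace.apply]
    simp [φ]
  have hallreal : ∀ w : InfinitePlace F, IsReal w := by
    intro w
    obtain ⟨i, rfl⟩ := hbij.surjective w
    exact isReal_mk_iff.mpr (hreal i)
  have hmult : ∀ w : InfinitePlace F, mult w = 1 := by
    intro w
    simp [mult, hallreal w]
  -- product of all places of a unit is 1
  have hprod1 : ∀ u : (𝓞 F)ˣ, ∏ w : InfinitePlace F, w ((u : 𝓞 F) : F) = 1 := by
    intro u
    have := prod_eq_abs_norm ((u : 𝓞 F) : F)
    simp_rw [hmult, pow_one] at this
    have hnorm : |Algebra.norm ℚ ((u : 𝓞 F) : F)| = 1 := by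
      rw [← RingOfIntegers.coe_norm, NumberField.isUnit_iff_norm.mp u.isUnit]
    rw [this, hnorm, Rat.cast_one]
  have hpos : ∀ (u : (𝓞 F)ˣ) (w : InfinitePlace F), 0 < w ((u : 𝓞 F) : F) := by
    intro u w
    exact pos_iff.mpr (Units.coe_ne_zero u)
  constructor
  · intro h
    -- step 1 : the relation holds for all units
    have hunits : ∀ u : (𝓞 F)ˣ, ∑ i, (n i : ℝ) * Real.log (e i ((u : 𝓞 F) : F)) = 0 := by
      intro u
      have hk : Γ.index ≠ 0 := hΓ.index_ne_zero
      have hmem : u ^ Γ.index ∈ Γ := Subgroup.pow_index_mem Γ u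
      have := h _ hmem
      -- take logs
      have hlog : ∑ i, (n i : ℝ) *
          Real.log (|σ i (algebraMap (𝓞 F) F ((u ^ Γ.index : (𝓞 F)ˣ) : 𝓞 F))|) = 0 := by
        have hne : ∀ i ∈ Finset.univ (α := Fin d),
            |σ i (algebraMap (𝓞 F) F ((u ^ Γ.index : (𝓞 F)ˣ) : 𝓞 F))| ^ n i ≠ 0 := by
          intro i _
          apply zpow_ne_zero
          simp only [ne_eq, abs_eq_zero]
          exact fun hc => Units.coe_ne_zero _ ((map_eq_zero (σ i)).mp hc)
        have := congrArg Real.log this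
        rw [Real.log_prod hne, Real.log_one] at this
        simpa [Real.log_zpow] using this
      have hpow : ∀ i, |σ i (algebraMap (𝓞 F) F ((u ^ Γ.index : (𝓞 F)ˣ) : 𝓞 F))| =
          |σ i (algebraMap (𝓞 F) F (u : 𝓞 F))| ^ Γ.index := by
        intro i
        rw [← abs_pow, ← map_pow, ← map_pow]
        norm_num
      simp_rw [hpow, Real.log_pow] at hlog
      have : (Γ.index : ℝ) * ∑ i, (n i : ℝ) * Real.log (|σ i (algebraMap (𝓞 F) F (u : 𝓞 F))|) = 0 := by
        rw [Finset.mul_sum]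
        rw [← hlog]
        congr 1
        ext i
        ring
      have hk' : (Γ.index : ℝ) ≠ 0 := Nat.cast_ne_zero.mpr hk
      have hsum := (mul_eq_zero.mp this).resolve_left hk'
      simp_rw [happly, RingOfIntegers.coe_eq_algebraMap]
      exact hsum
    -- step 2 : sum of logs over all places is 0
    have hsumlog : ∀ u : (𝓞 F)ˣ, ∑ w : InfinitePlace F, Real.log (w ((u : 𝓞 F) : F)) = 0 := by
      intro u
      rw [← Real.log_prod fun w _ => ne_of_gt (hpos u w), hprod1, Real.log_one]
    set i₀ : Fin d := e.symm w₀ with hi₀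
    refine ⟨n i₀, fun i => ?_⟩
    -- the linear functional
    set c : {w : InfinitePlace F // w ≠ w₀} → ℝ :=
      fun w => (n (e.symm w.1) : ℝ) - (n i₀ : ℝ) with hc
    let f : ({w : InfinitePlace F // w ≠ w₀} → ℝ) →ₗ[ℝ] ℝ :=
      { toFun := fun x => ∑ w, c w * x w
        map_add' := by intro x y; simp [mul_add, Finset.sum_add_distrib]
        map_smul' := by
          intro r x
          simp only [Pi.smul_apply, smul_eq_mul, RingHom.id_apply, Finset.mul_sum]
          exact Finset.sum_congr rfl fun w _ => by ring }
    have hfvanish : ∀ x ∈ unitLattice F, f x = 0 := by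
      intro x hx
      obtain ⟨u, -, rfl⟩ := hx
      show f ((logEmbedding F) u) = 0
      have hfx : f (logEmbedding F u) =
          ∑ w : {w : InfinitePlace F // w ≠ w₀}, c w * Real.log (w.1 ((u.toMul : 𝓞 F) : F)) := by
        simp only [f, LinearMap.coe_mk, AddHom.coe_mk]
        refine Finset.sum_congr rfl fun w _ => ?_
        have hcomp : (logEmbedding F u) w = mult w.val * Real.log (w.val ((u.toMul : 𝓞 F) : F)) := rfl
        rw [hcomp, hmult]
        push_cast
        ring
      rw [hfx]
      have hsub : ∑ w : {w : InfinitePlace F // w ≠ w₀}, c w * Real.log (w.1 ((u.toMul : 𝓞 F) : F)) =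
          ∑ w ∈ Finset.univ.erase w₀,
            ((n (e.symm w) : ℝ) - (n i₀ : ℝ)) * Real.log (w ((u.toMul : 𝓞 F) : F)) := by
        exact (Finset.sum_subtype (p := fun w => w ≠ w₀) (Finset.univ.erase w₀)
          (fun w => by simp [Finset.mem_erase])
          (fun w => ((n (e.symm w) : ℝ) - (n i₀ : ℝ)) * Real.log (w ((u.toMul : 𝓞 F) : F)))).symm
      rw [hsub, Finset.sum_erase_eq_sub (Finset.mem_univ w₀)]
      have hAll : ∑ w : InfinitePlace F,
          ((n (e.symm w) : ℝ) - (n i₀ : ℝ)) * Real.log (w ((u.toMul : 𝓞 F) : F)) = 0 := by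
        have h1 : ∑ w : InfinitePlace F, (n (e.symm w) : ℝ) * Real.log (w ((u.toMul : 𝓞 F) : F))
            = 0 := by
          rw [← Equiv.sum_comp e (fun w => (n (e.symm w) : ℝ) * Real.log (w ((u.toMul : 𝓞 F) : F)))]
          simp only [Equiv.symm_apply_apply]
          exact hunits u.toMul
        have h2 := hsumlog u.toMul
        calc ∑ w : InfinitePlace F,
            ((n (e.symm w) : ℝ) - (n i₀ : ℝ)) * Real.log (w ((u.toMul : 𝓞 F) : F))
            = (∑ w : InfinitePlace F, (n (e.symm w) : ℝ) * Real.log (w ((u.toMul : 𝓞 F) : F)))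
              - (n i₀ : ℝ) * ∑ w : InfinitePlace F, Real.log (w ((u.toMul : 𝓞 F) : F)) := by
              rw [Finset.mul_sum, ← Finset.sum_sub_distrib]; congr 1; ext w; ring
          _ = 0 := by rw [h1, h2, mul_zero, sub_zero]
      rw [hAll]
      simp [hi₀]
    have hker : (⊤ : Submodule ℝ _) ≤ LinearMap.ker f := by
      rw [← unitLattice_span_eq_top F]
      rw [Submodule.span_le]
      intro x hx
      exact LinearMap.mem_ker.mpr (hfvanish x hx)
    have hf0 : ∀ x, f x = 0 := fun x => hker (Submodule.mem_top) 
    -- evaluate at single coordinates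
    have hcw : ∀ w : {w : InfinitePlace F // w ≠ w₀}, c w = 0 := by
      intro w
      have := hf0 (Pi.single w 1)
      simpa [f, Pi.single_apply, mul_ite, Finset.sum_ite_eq'] using this
    by_cases hi : e i = w₀
    · have : i = i₀ := by rw [hi₀, ← hi, Equiv.symm_apply_apply]
      rw [this]
    · have := hcw ⟨e i, hi⟩
      rw [hc] at this
      simp only [Equiv.symm_apply_apply] at this
      have : (n i : ℝ) = (n i₀ : ℝ) := by linarith [this]
      exact_mod_cast this
  · rintro ⟨m, hm⟩ t ht
    have heq : ∀ i, |σ i (algebraMap (𝓞 F) F (t : 𝓞 F))| = e i ((t : 𝓞 F) : F) :=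
      fun i => (happly i _).symm
    simp_rw [hm, heq]
    rw [Finset.prod_zpow]
    have hone : ∏ i, e i ((t : 𝓞 F) : F) = 1 := by
      rw [Equiv.prod_comp e (fun w => w ((t : 𝓞 F) : F))]
      exact hprod1 t
    rw [hone, one_zpow]
end

section
/- Let F be a totally real number field of degree d over ℚ, with real embeddings σ_1, …, σ_d : F → ℝ, and let 𝓞_F be its ring of integers. Let Γ be a subgroup of finite index of the unit group 𝓞_F^× such that every element t ∈ Γ has norm N_{F/ℚ}(t) = ∏_{i=1}^d σ_i(t) = 1. Then for every d-tuple of integers (n_1, …, n_d), one has ∏_{i=1}^d σ_i(t)^{n_i} = 1 for every t ∈ Γ if and only if all the n_i are equal to a common integer. -/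
open scoped NumberField

open NumberField NumberField.InfinitePlace NumberField.Units
  NumberField.Units.dirichletUnitTheorem

set_option maxHeartbeats 1000000

/-- Let `F` be a totally real number field of degree `d` over `ℚ`, with
(pairwise distinct) real embeddings `σ 0, …, σ (d-1) : F → ℝ`, and let `Γ` be a finite
index subgroup of the unit group `(𝓞 F)ˣ` all of whose elements have norm
`∏ i, σ i t = 1`.  Then for every `d`-tuple of integers `n`, one has
`∏ i, σ i t ^ (n i) = 1` for every `t ∈ Γ` if and only if all the `n i` are equal to a
common integer. -/
theorem prod_embedding_zpow_eq_one_iff_parallel_of_norm_one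
    {F : Type} [Field F] [NumberField F] {d : ℕ}
    (σ : Fin d → (F →+* ℝ)) (hσ : Function.Injective σ)
    (hd : d = Module.finrank ℚ F)
    (Γ : Subgroup (𝓞 F)ˣ) (hΓ : Γ.FiniteIndex)
    (hnorm : ∀ t ∈ Γ, ∏ i, σ i (algebraMap (𝓞 F) F (t : 𝓞 F)) = 1)
    (n : Fin d → ℤ) :
    (∀ t ∈ Γ, ∏ i, σ i (algebraMap (𝓞 F) F (t : 𝓞 F)) ^ n i = 1) ↔
      ∃ m : ℤ, ∀ i, n i = m := by
  classical
  constructor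
  · intro H
    -- the complex embeddings associated to the real embeddings
    set τ : Fin d → (F →+* ℂ) := fun i => Complex.ofRealHom.comp (σ i) with hτdef
    have hτreal : ∀ i, ComplexEmbedding.IsReal (τ i) := by
      intro i
      rw [ComplexEmbedding.isReal_iff]
      ext x
      simp [τ, ComplexEmbedding.conjugate, RingHom.star_apply, Complex.conj_ofReal]
    have hτinj : Function.Injective τ := by
      intro i j hij
      refine hσ ?_
      ext x
      have := RingHom.congr_fun hij x
      simpa [τ] using this
    -- the corresponding infinite places
    set w : Fin d → InfinitePlace F := fun i => InfinitePlace.mk (τ i) with hwdef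
    have hwinj : Function.Injective w := by
      intro i j hij
      rcases InfinitePlace.mk_eq_iff.mp hij with h | h
      · exact hτinj h
      · apply hτinj
        rwa [ComplexEmbedding.isReal_iff.mp (hτreal i)] at h
    have hwreal : ∀ i, IsReal (w i) := fun i => ⟨τ i, hτreal i, rfl⟩
    have hwapp : ∀ i x, (w i) x = |σ i x| := by
      intro i x
      simp [w, InfinitePlace.apply, τ, Complex.norm_real, Real.norm_eq_abs]
    -- `w` is bijective
    have hcard_le : Fintype.card (InfinitePlace F) ≤ d := by
      rw [hd, ← card_add_two_mul_card_eq_rank, card_eq_nrRealPlaces_add_nrComplexPlaces]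
      omega
    have hbij : Function.Bijective w := by
      refine (Fintype.bijective_iff_injective_and_card w).mpr ⟨hwinj, ?_⟩
      have := Fintype.card_le_of_injective w hwinj
      simp only [Fintype.card_fin] at *
      omega
    -- all infinite places are real, hence of multiplicity one
    have hallreal : ∀ v : InfinitePlace F, IsReal v := by
      intro v
      obtain ⟨i, rfl⟩ := hbij.surjective v
      exact hwreal i
    have hmult : ∀ v : InfinitePlace F, (mult v : ℝ) = 1 := by
      intro v
      simp [mult, hallreal v]
    set e : Fin d ≃ InfinitePlace F := Equiv.ofBijective w hbij with hedef
    set N : InfinitePlace F → ℤ := fun v => n (e.symm v) with hNdef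
    have hNe : ∀ i, N (w i) = n i := by
      intro i
      have : e.symm (e i) = i := e.symm_apply_apply i
      simp only [N]
      have hei : e i = w i := rfl
      rw [← hei, this]
    -- auxiliary: sums over the subtype `{v // v ≠ w₀}`
    have hsub : ∀ g : InfinitePlace F → ℝ,
        ∑ v : {v : InfinitePlace F // v ≠ w₀}, g v.1
          = ∑ v ∈ Finset.univ.erase (w₀ : InfinitePlace F), g v := by
      intro g
      refine (Finset.sum_subtype _ (fun v => ?_) g).symm
      simp [Finset.mem_erase]
    have hsplit : ∀ g : InfinitePlace F → ℝ,
        ∑ v ∈ Finset.univ.erase (w₀ : InfinitePlace F), g v + g w₀ = ∑ v, g v := by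
      intro g
      exact Finset.sum_erase_add _ _ (Finset.mem_univ _)
    -- nonvanishing of embeddings of units
    have hne : ∀ (u : (𝓞 F)ˣ) i, σ i (algebraMap (𝓞 F) F (u : 𝓞 F)) ≠ 0 := by
      intro u i h
      have h0 : (algebraMap (𝓞 F) F (u : 𝓞 F)) ≠ 0 := by
        simpa using RingOfIntegers.coe_ne_zero u
      exact h0 ((map_eq_zero _).mp h)
    -- Step B : for every unit, the sum of all logs vanishes
    have hB : ∀ u : (𝓞 F)ˣ, ∑ v : InfinitePlace F,
        Real.log (v (algebraMap (𝓞 F) F (u : 𝓞 F))) = 0 := by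
      intro u
      have h := sum_logEmbedding_component (K := F) u
      simp only [logEmbedding_component, hmult, one_mul, neg_mul] at h
      have h' := hsub (fun v => Real.log (v (algebraMap (𝓞 F) F (u : 𝓞 F))))
      rw [← hsplit (fun v => Real.log (v (algebraMap (𝓞 F) F (u : 𝓞 F))))]
      linarith [h, h']
    -- Step A : for every `t ∈ Γ`, the `N`-weighted sum of logs vanishes
    have hA : ∀ t ∈ Γ, ∑ v : InfinitePlace F,
        (N v : ℝ) * Real.log (v (algebraMap (𝓞 F) F (t : 𝓞 F))) = 0 := by
      intro t ht
      have h1 := congr_arg Real.log (H t ht)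
      rw [Real.log_prod (fun i _ => zpow_ne_zero _ (hne t i)), Real.log_one] at h1
      simp only [Real.log_zpow] at h1
      calc ∑ v : InfinitePlace F, (N v : ℝ) * Real.log (v (algebraMap (𝓞 F) F (t : 𝓞 F)))
          = ∑ i, (N (w i) : ℝ) * Real.log ((w i) (algebraMap (𝓞 F) F (t : 𝓞 F))) :=
            (Fintype.sum_bijective w hbij _ _ (fun i => rfl)).symm
        _ = ∑ i, (n i : ℝ) * Real.log (σ i (algebraMap (𝓞 F) F (t : 𝓞 F))) := by
            refine Finset.sum_congr rfl (fun i _ => ?_)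
            rw [hNe i, hwapp, Real.log_abs]
        _ = 0 := h1
    -- the linear functional on `{v // v ≠ w₀} → ℝ`
    set c : {v : InfinitePlace F // v ≠ w₀} → ℝ := fun v => (N v.1 : ℝ) - (N w₀ : ℝ)
      with hcdef
    set Φ : ({v : InfinitePlace F // v ≠ w₀} → ℝ) →ₗ[ℝ] ℝ :=
      { toFun := fun x => ∑ v, c v * x v
        map_add' := by
          intro x y
          simp [mul_add, Finset.sum_add_distrib]
        map_smul' := by
          intro r x
          simp [Finset.mul_sum, mul_left_comm] } with hΦdef
    -- `Φ` vanishes on the log embedding of elements of `Γ`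
    have hΦΓ : ∀ t ∈ Γ, Φ (logEmbedding F (Additive.ofMul t)) = 0 := by
      intro t ht
      have key : ∀ v : {v : InfinitePlace F // v ≠ w₀},
          c v * (logEmbedding F (Additive.ofMul t)) v
            = ((N v.1 : ℝ) - (N w₀ : ℝ)) *
                Real.log (v.1 (algebraMap (𝓞 F) F (t : 𝓞 F))) := by
        intro v
        rw [logEmbedding_component, hmult, one_mul]
      have h1 : ∑ v ∈ Finset.univ.erase (w₀ : InfinitePlace F),
          (N v : ℝ) * Real.log (v (algebraMap (𝓞 F) F (t : 𝓞 F)))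
            = - ((N w₀ : ℝ) * Real.log (w₀ (algebraMap (𝓞 F) F (t : 𝓞 F)))) := by
        have := hsplit (fun v => (N v : ℝ) * Real.log (v (algebraMap (𝓞 F) F (t : 𝓞 F))))
        rw [hA t ht] at this
        linarith [this]
      have h2 : ∑ v ∈ Finset.univ.erase (w₀ : InfinitePlace F),
          Real.log (v (algebraMap (𝓞 F) F (t : 𝓞 F)))
            = - Real.log (w₀ (algebraMap (𝓞 F) F (t : 𝓞 F))) := by
        have := hsplit (fun v => Real.log (v (algebraMap (𝓞 F) F (t : 𝓞 F))))
        rw [hB t] at this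
        linarith [this]
      show (∑ v, c v * (logEmbedding F (Additive.ofMul t)) v) = 0
      rw [Finset.sum_congr rfl (fun v _ => key v)]
      have hexp : ∑ v : {v : InfinitePlace F // v ≠ w₀},
          ((N v.1 : ℝ) - (N w₀ : ℝ)) * Real.log (v.1 (algebraMap (𝓞 F) F (t : 𝓞 F)))
            = (∑ v : {v : InfinitePlace F // v ≠ w₀},
                (N v.1 : ℝ) * Real.log (v.1 (algebraMap (𝓞 F) F (t : 𝓞 F))))
              - (N w₀ : ℝ) * ∑ v : {v : InfinitePlace F // v ≠ w₀},
                  Real.log (v.1 (algebraMap (𝓞 F) F (t : 𝓞 F))) := by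
        rw [Finset.mul_sum, ← Finset.sum_sub_distrib]
        exact Finset.sum_congr rfl (fun v _ => by ring)
      rw [hexp,
        hsub (fun v => (N v : ℝ) * Real.log (v (algebraMap (𝓞 F) F (t : 𝓞 F)))),
        hsub (fun v => Real.log (v (algebraMap (𝓞 F) F (t : 𝓞 F)))), h1, h2]
      ring
    -- `Φ` vanishes on the log embedding of every unit, by finite index
    have hΦU : ∀ u : (𝓞 F)ˣ, Φ (logEmbedding F (Additive.ofMul u)) = 0 := by
      intro u
      have hk : u ^ Γ.index ∈ Γ := Subgroup.pow_index_mem Γ u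
      have hkne : (Γ.index : ℝ) ≠ 0 := Nat.cast_ne_zero.mpr hΓ.index_ne_zero
      have h := hΦΓ _ hk
      have hlog : logEmbedding F (Additive.ofMul (u ^ Γ.index))
          = Γ.index • logEmbedding F (Additive.ofMul u) := by
        rw [ofMul_pow, map_nsmul]
      rw [hlog, map_nsmul] at h
      have : (Γ.index : ℝ) * Φ (logEmbedding F (Additive.ofMul u)) = 0 := by
        simpa [nsmul_eq_mul] using h
      exact (mul_eq_zero.mp this).resolve_left hkne
    -- hence `Φ` vanishes on the unit lattice, whose `ℝ`-span is everything
    have hker : (unitLattice F : Set ({v : InfinitePlace F // v ≠ w₀} → ℝ))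
        ⊆ (LinearMap.ker Φ : Set _) := by
      intro x hx
      obtain ⟨u, -, rfl⟩ := hx
      exact hΦU u
    have htop : (⊤ : Submodule ℝ ({v : InfinitePlace F // v ≠ w₀} → ℝ))
        ≤ LinearMap.ker Φ := by
      rw [← unitLattice_span_eq_top F]
      exact Submodule.span_le.mpr hker
    have hΦ0 : ∀ x, Φ x = 0 := fun x => LinearMap.mem_ker.mp (htop Submodule.mem_top)
    -- evaluate at coordinate vectors
    have hc0 : ∀ v : {v : InfinitePlace F // v ≠ w₀}, c v = 0 := by
      intro v
      set x0 : {v : InfinitePlace F // v ≠ w₀} → ℝ := fun v' => if v' = v then 1 else 0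
        with hx0
      have heval : Φ x0 = c v := by
        have hr : Φ x0 = ∑ v', c v' * x0 v' := rfl
        rw [hr, Finset.sum_eq_single v]
        · simp [x0]
        · intro b _ hb
          simp [x0, hb]
        · simp
      rw [← heval]
      exact hΦ0 _
    have hNconst : ∀ v : InfinitePlace F, N v = N w₀ := by
      intro v
      by_cases hv : v = w₀
      · rw [hv]
      · have := hc0 ⟨v, hv⟩
        have : ((N v : ℝ) - (N w₀ : ℝ)) = 0 := this
        have : (N v : ℝ) = (N w₀ : ℝ) := by linarith
        exact_mod_cast this
    exact ⟨N w₀, fun i => by rw [← hNe i, hNconst (w i)]⟩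
  · rintro ⟨m, hm⟩ t ht
    have : ∀ i, σ i (algebraMap (𝓞 F) F (t : 𝓞 F)) ^ n i
        = σ i (algebraMap (𝓞 F) F (t : 𝓞 F)) ^ m := fun i => by rw [hm i]
    rw [Finset.prod_congr rfl (fun i _ => this i), Finset.prod_zpow, hnorm t ht, one_zpow]
end

section
/- Let I be a nonempty finite set and let I^0, I^1, I^2, I^3 be pairwise disjoint subsets of I with I^0 ∪ I^1 ∪ I^2 ∪ I^3 = I. Let k_1, k_2 : I → ℤ be functions satisfying the dominance condition k_1(σ) ≥ k_2(σ) ≥ 0 for every σ ∈ I. Suppose that (i) there is an integer κ such that k_1(σ) + k_2(σ) = κ for every σ ∈ I^0, k_1(σ) − k_2(σ) − 2 = κ for every σ ∈ I^1, −(k_1(σ) − k_2(σ) + 4) = κ for every σ ∈ I^2, and −(k_1(σ) + k_2(σ) + 6) = κ for every σ ∈ I^3; and (ii) there is an integer θ such that k_2(σ) = θ for every σ ∈ I^0, −k_2(σ) − 2 = θ for every σ ∈ I^1, and −k_1(σ) − 3 = θ for every σ ∈ I^2 ∪ I^3. Then one of the following holds: (a) I = I^0 and k_2 is constant on I; (b)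 I = I^1 and k_2 is constant on I; (c) I = I^2 ∪ I^3 and k_1 is constant on I. -/
/-- Let `I` be a nonempty finite set decomposed into pairwise disjoint
subsets `I⁰, I¹, I², I³`, and let `k₁, k₂ : I → ℤ` satisfy `k₁ σ ≥ k₂ σ ≥ 0` for all `σ`.
Suppose (i) there is `κ : ℤ` with `k₁ σ + k₂ σ = κ` on `I⁰`, `k₁ σ - k₂ σ - 2 = κ` on
`I¹`, `-(k₁ σ - k₂ σ + 4) = κ` on `I²`, `-(k₁ σ + k₂ σ + 6) = κ` on `I³`, and (ii) there
is `θ : ℤ` with `k₂ σ = θ` on `I⁰`, `-k₂ σ - 2 = θ` on `I¹`, and `-k₁ σ - 3 = θ` on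
`I² ∪ I³`.  Then one of the following holds: (a) `I = I⁰` and `k₂` is constant;
(b) `I = I¹` and `k₂` is constant; (c) `I = I² ∪ I³` and `k₁` is constant. -/
theorem kostantParallel_det_trichotomy
    {I : Type} [Finite I] [Nonempty I] (I0 I1 I2 I3 : Set I)
    (h01 : Disjoint I0 I1) (h02 : Disjoint I0 I2) (h03 : Disjoint I0 I3)
    (h12 : Disjoint I1 I2) (h13 : Disjoint I1 I3) (h23 : Disjoint I2 I3)
    (hcover : I0 ∪ I1 ∪ I2 ∪ I3 = Set.univ)
    (k₁ k₂ : I → ℤ) (hdom : ∀ σ, k₂ σ ≤ k₁ σ ∧ 0 ≤ k₂ σ) (κ θ : ℤ)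
    (h0 : ∀ σ ∈ I0, k₁ σ + k₂ σ = κ)
    (h1 : ∀ σ ∈ I1, k₁ σ - k₂ σ - 2 = κ)
    (h2 : ∀ σ ∈ I2, -(k₁ σ - k₂ σ + 4) = κ)
    (h3 : ∀ σ ∈ I3, -(k₁ σ + k₂ σ + 6) = κ)
    (g0 : ∀ σ ∈ I0, k₂ σ = θ)
    (g1 : ∀ σ ∈ I1, -k₂ σ - 2 = θ)
    (g23 : ∀ σ ∈ I2 ∪ I3, -k₁ σ - 3 = θ) :
    (I0 = Set.univ ∧ ∃ c : ℤ, ∀ σ, k₂ σ = c) ∨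
    (I1 = Set.univ ∧ ∃ c : ℤ, ∀ σ, k₂ σ = c) ∨
    (I2 ∪ I3 = Set.univ ∧ ∃ c : ℤ, ∀ σ, k₁ σ = c) := by

  have cov : ∀ σ : I, σ ∈ I0 ∨ σ ∈ I1 ∨ σ ∈ I2 ∪ I3 := by
    intro σ
    have : σ ∈ I0 ∪ I1 ∪ I2 ∪ I3 := by rw [hcover]; trivial
    rcases this with ((h | h) | h) | h
    · exact Or.inl h
    · exact Or.inr (Or.inl h)
    · exact Or.inr (Or.inr (Or.inl h))
    · exact Or.inr (Or.inr (Or.inr h))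
  by_cases hI0 : I0.Nonempty
  · obtain ⟨σ0, hσ0⟩ := hI0
    have hθ : 0 ≤ θ := (g0 σ0 hσ0) ▸ (hdom σ0).2
    left
    have hall : ∀ σ : I, σ ∈ I0 := by
      intro σ
      rcases cov σ with h | h | h
      · exact h
      · have := g1 σ h; have := (hdom σ).2; omega
      · have h' := g23 σ h
        have := (hdom σ).1; have := (hdom σ).2; omega
    exact ⟨Set.eq_univ_of_forall hall, θ, fun σ => g0 σ (hall σ)⟩
  · by_cases hI1 : I1.Nonempty
    · obtain ⟨σ1, hσ1⟩ := hI1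
      have hκ : -2 ≤ κ := by
        have := h1 σ1 hσ1; have := (hdom σ1).1; omega
      right; left
      have hall : ∀ σ : I, σ ∈ I1 := by
        intro σ
        rcases cov σ with h | h | h
        · exact absurd ⟨σ, h⟩ hI0
        · exact h
        · rcases h with h | h
          · have := h2 σ h; have := (hdom σ).1; have := (hdom σ).2; omega
          · have := h3 σ h; have := (hdom σ).1; have := (hdom σ).2; omega
      refine ⟨Set.eq_univ_of_forall hall, -θ - 2, fun σ => ?_⟩
      have := g1 σ (hall σ); omega
    · right; right
      have hall : ∀ σ : I, σ ∈ I2 ∪ I3 := by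
        intro σ
        rcases cov σ with h | h | h
        · exact absurd ⟨σ, h⟩ hI0
        · exact absurd ⟨σ, h⟩ hI1
        · exact h
      refine ⟨Set.eq_univ_of_forall hall, -θ - 3, fun σ => ?_⟩
      have := g23 σ (hall σ); omega
end
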